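/- Let α > 0, 1 ≤ p < ∞, 1 ≤ q < ∞. For any nonincreasing nonnegative function g on (0,1), the Lorentz-type quantity (∫₀¹ (t^{1/α} g(t))^{q} t^{q/p - 1} dt)^{1/q} is equivalent (with constants depending only on p, q, α) to (∫₀¹ (t^{1/p + 1/α} g(t))^q dt/t)^{1/q}; that is, ‖ g(t) t^{1/α} ‖_{L^{p,q}(0,1)} ≃ ‖g‖_{L^{pα/(p+α), q}(0,1)}, where the L^{p,q} norm of h is (∫₀¹ (t^{1/p} h^*(t))^q dt/t)^{1/q} and h^* denotes the decreasing rearrangement with respect to Lebesgue measure on (0,1). -/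

import Mathlib

set_option maxHeartbeats 1000000

open MeasureTheory Set
open scoped ENNReal Classical

lemma measurable_ite_of_antitoneOn {s : Set ℝ} (hs : s.OrdConnected) {f : ℝ → ℝ}
    (hf : AntitoneOn f s) :
    Measurable (s.indicator f) := by
  apply measurable_of_Ioi
  intro a
  have heq : s.indicator f ⁻¹' Ioi a
      = {x | x ∈ s ∧ a < f x} ∪ {x | x ∉ s ∧ a < 0} := by
    ext x; by_cases hx : x ∈ s <;> simp [indicator_apply, hx]
  rw [heq]
  apply MeasurableSet.union
  · have h1 : ({x | x ∈ s ∧ a < f x} : Set ℝ).OrdConnected := by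
      constructor
      intro x hx z hz y hy
      have hys : y ∈ s := hs.out hx.1 hz.1 hy
      exact ⟨hys, lt_of_lt_of_le hz.2 (hf hys hz.1 hy.2)⟩
    exact h1.measurableSet
  · by_cases ha : a < 0
    · have : {x | x ∉ s ∧ a < 0} = sᶜ := by ext x; simp [ha]
      rw [this]; exact hs.measurableSet.compl
    · have : {x | x ∉ s ∧ a < 0} = (∅ : Set ℝ) := by ext x; simp [ha]
      rw [this]; exact MeasurableSet.empty

lemma alg_rpow {t y a q : ℝ} (ht : 0 < t) (hy : 0 ≤ y) :
    (t ^ a * y) ^ q / t = t ^ (a * q - 1) * y ^ q := by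
  rw [Real.mul_rpow (Real.rpow_nonneg ht.le a) hy, ← Real.rpow_mul ht.le,
    Real.rpow_sub ht, Real.rpow_one, mul_div_right_comm]

lemma lintegral_rpow_Ioo {r c : ℝ} (hr : -1 < r) (hc : 0 < c) :
    ∫⁻ t in Ioo 0 c, ENNReal.ofReal (t ^ r) = ENNReal.ofReal (c ^ (r + 1) / (r + 1)) := by
  have hint : IntegrableOn (fun t : ℝ => t ^ r) (Ioo 0 c) := by
    have h := intervalIntegral.intervalIntegrable_rpow' (a := 0) (b := c) hr
    rw [intervalIntegrable_iff_integrableOn_Ioo_of_le hc.le] at h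
    exact h
  have hnn : 0 ≤ᵐ[volume.restrict (Ioo (0:ℝ) c)] fun t : ℝ => t ^ r := by
    filter_upwards [ae_restrict_mem measurableSet_Ioo] with t ht
    exact Real.rpow_nonneg ht.1.le r
  rw [← ofReal_integral_eq_lintegral_ofReal hint hnn]
  congr 1
  rw [← integral_Ioc_eq_integral_Ioo, ← intervalIntegral.integral_of_le hc.le,
    integral_rpow (Or.inl hr), Real.zero_rpow (by linarith), sub_zero]

lemma lintegral_Ioo_comp_three (F : ℝ → ℝ≥0∞) (hF : Measurable F) (c : ℝ) :
    ∫⁻ s in Ioo 0 c, F (3 * s) = ENNReal.ofReal 3⁻¹ * ∫⁻ t in Ioo 0 (3 * c), F t := by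
  have h1 : ∀ s : ℝ, (Ioo (0:ℝ) c).indicator (fun s => F (3 * s)) s
      = (Ioo (0:ℝ) (3 * c)).indicator F (3 * s) := by
    intro s
    have hmem : s ∈ Ioo (0:ℝ) c ↔ 3 * s ∈ Ioo (0:ℝ) (3 * c) := by
      constructor <;> intro h <;> constructor <;> nlinarith [h.1, h.2]
    by_cases hs : s ∈ Ioo (0:ℝ) c
    · rw [indicator_of_mem hs, indicator_of_mem (hmem.1 hs)]
    · rw [indicator_of_notMem hs, indicator_of_notMem (fun h => hs (hmem.2 h))]
  rw [← lintegral_indicator measurableSet_Ioo, ← lintegral_indicator measurableSet_Ioo]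
  calc ∫⁻ s, (Ioo (0:ℝ) c).indicator (fun s => F (3 * s)) s
      = ∫⁻ s, (Ioo (0:ℝ) (3 * c)).indicator F (3 * s) := lintegral_congr h1
    _ = ∫⁻ x, (Ioo (0:ℝ) (3 * c)).indicator F x ∂(Measure.map (fun x : ℝ => 3 * x) volume) := by
        rw [lintegral_map (hF.indicator measurableSet_Ioo) (measurable_const_mul 3)]
    _ = ENNReal.ofReal 3⁻¹ * ∫⁻ x, (Ioo (0:ℝ) (3 * c)).indicator F x := by
        rw [show (fun x : ℝ => 3 * x) = (fun x : ℝ => (3:ℝ) * x) from rfl]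
        rw [Real.map_volume_mul_left (by norm_num : (3:ℝ) ≠ 0)]
        rw [lintegral_smul_measure]
        norm_num [abs_of_nonneg]

/-- Decreasing rearrangement with respect to Lebesgue measure on `(0,1)`. -/
noncomputable def decRearr (h : ℝ → ℝ) (s : ℝ) : ℝ :=
  sInf {l : ℝ | 0 ≤ l ∧
    (MeasureTheory.volume {x ∈ Set.Ioo (0:ℝ) 1 | l < |h x|}).toReal ≤ s}

/-- For nonincreasing nonnegative `g` on `(0,1)`,
`‖t^{1/α} g(t)‖_{L^{p,q}(0,1)} ≃ ‖g‖_{L^{pα/(p+α),q}(0,1)}`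
with constants depending only on `p, q, α`. -/
theorem stmt7 (α p q : ℝ) (hα : 0 < α) (hp : 1 ≤ p) (hq : 1 ≤ q) :
    ∃ c > 0, ∀ g : ℝ → ℝ, AntitoneOn g (Set.Ioo 0 1) →
      (∀ t ∈ Set.Ioo (0:ℝ) 1, 0 ≤ g t) →
      ((1/c) * (∫ t in (0:ℝ)..1, (t ^ (1/p + 1/α) * g t) ^ q / t) ^ (1/q)
          ≤ (∫ t in (0:ℝ)..1,
              (t ^ (1/p) * decRearr (fun x => x ^ (1/α) * g x) t) ^ q / t) ^ (1/q)
        ∧ (∫ t in (0:ℝ)..1,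
              (t ^ (1/p) * decRearr (fun x => x ^ (1/α) * g x) t) ^ q / t) ^ (1/q)
          ≤ c * (∫ t in (0:ℝ)..1, (t ^ (1/p + 1/α) * g t) ^ q / t) ^ (1/q)) := by
  have hp0 : 0 < p := lt_of_lt_of_le one_pos hp
  have hq0 : 0 < q := lt_of_lt_of_le one_pos hq
  have hqne : q ≠ 0 := hq0.ne'
  set r : ℝ := (1/p + 1/α) * q with hr_def
  have hr0 : 0 < r := by positivity
  set c₁ : ℝ := (3:ℝ)⁻¹ ^ r with hc1_def
  have hc10 : 0 < c₁ := Real.rpow_pos_of_pos (by norm_num) r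
  set c₂ : ℝ := (2:ℝ) ^ (1 + q/α) * ((p/q) * (2:ℝ) ^ (q/p)) with hc2_def
  have hc20 : 0 < c₂ := by positivity
  set c : ℝ := c₂ ^ (1/q) + (c₁ ^ (1/q))⁻¹ with hc_def
  have hc0 : 0 < c := by positivity
  refine ⟨c, hc0, ?_⟩
  intro g hg hg0
  set f : ℝ → ℝ := fun x => x ^ (1/α) * g x with hf_def
  set G : ℝ → ℝ := (Ioo (0:ℝ) 1).indicator g with hG_def
  have hGmeas : Measurable G := by
    rw [hG_def]; exact measurable_ite_of_antitoneOn Set.ordConnected_Ioo hg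
  have hGeq : ∀ x ∈ Ioo (0:ℝ) 1, G x = g x := fun x hx => indicator_of_mem hx g
  have hdr : ∀ s : ℝ, decRearr f s
      = sInf {l : ℝ | 0 ≤ l ∧ (volume {x ∈ Ioo (0:ℝ) 1 | l < |f x|}).toReal ≤ s} :=
    fun _ => rfl
  have hDnonneg : ∀ s : ℝ, 0 ≤ decRearr f s :=
    fun s => Real.sInf_nonneg fun x hx => hx.1
  -- nonemptiness of the defining set
  have hSetNe : ∀ s : ℝ, 0 < s →
      {l : ℝ | 0 ≤ l ∧ (volume {x ∈ Ioo (0:ℝ) 1 | l < |f x|}).toReal ≤ s}.Nonempty := by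
    intro s hs
    set δ : ℝ := min (s/2) (1/2) with hδ_def
    have hδ0 : 0 < δ := lt_min (by linarith) (by norm_num)
    have hδ1 : δ < 1 := lt_of_le_of_lt (min_le_right _ _) (by norm_num)
    have hδIoo : δ ∈ Ioo (0:ℝ) 1 := ⟨hδ0, hδ1⟩
    refine ⟨g δ, hg0 δ hδIoo, ?_⟩
    have hsub : {x ∈ Ioo (0:ℝ) 1 | g δ < |f x|} ⊆ Ioo 0 δ := by
      rintro x ⟨hx, hlt⟩
      refine ⟨hx.1, ?_⟩
      by_contra hge
      push_neg at hge
      have h1 : x ^ (1/α) ≤ 1 := Real.rpow_le_one hx.1.le hx.2.le (by positivity)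
      have h2 : g x ≤ g δ := hg hδIoo hx hge
      have h3 : 0 ≤ g x := hg0 x hx
      have habs : |f x| = x ^ (1/α) * g x :=
        abs_of_nonneg (mul_nonneg (Real.rpow_nonneg hx.1.le _) h3)
      rw [habs] at hlt
      nlinarith [Real.rpow_nonneg hx.1.le (1/α)]
    have hle : volume {x ∈ Ioo (0:ℝ) 1 | g δ < |f x|} ≤ ENNReal.ofReal δ := by
      calc volume {x ∈ Ioo (0:ℝ) 1 | g δ < |f x|} ≤ volume (Ioo 0 δ) := measure_mono hsub
        _ = ENNReal.ofReal δ := by rw [Real.volume_Ioo, sub_zero]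
    exact (ENNReal.toReal_le_of_le_ofReal hδ0.le hle).trans
      (le_trans (min_le_left _ _) (by linarith))
  -- lower pointwise bound for decRearr
  have hlow : ∀ s ∈ Ioo (0:ℝ) (1/3), s ^ (1/α) * g (3*s) ≤ decRearr f s := by
    intro s hs
    have h3s : 3*s ∈ Ioo (0:ℝ) 1 := ⟨by linarith [hs.1], by linarith [hs.2]⟩
    rw [hdr]
    apply le_csInf (hSetNe s hs.1)
    rintro l ⟨hl0, hlm⟩
    by_contra hlt
    push_neg at hlt
    have hsub : Ioo (3*s/2) (3*s) ⊆ {x ∈ Ioo (0:ℝ) 1 | l < |f x|} := by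
      intro x hx
      have hx01 : x ∈ Ioo (0:ℝ) 1 := ⟨by linarith [hx.1, hs.1], by linarith [hx.2, h3s.2]⟩
      have hfl : s ^ (1/α) * g (3*s) ≤ f x := by
        have h1 : s ^ (1/α) ≤ x ^ (1/α) :=
          Real.rpow_le_rpow hs.1.le (by linarith [hx.1, hs.1]) (by positivity)
        have h2 : g (3*s) ≤ g x := hg hx01 h3s hx.2.le
        have h3 : 0 ≤ g (3*s) := hg0 _ h3s
        have h4 : 0 ≤ x ^ (1/α) := Real.rpow_nonneg hx01.1.le _
        have h5 : 0 ≤ s ^ (1/α) := Real.rpow_nonneg hs.1.le _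
        show s ^ (1/α) * g (3*s) ≤ x ^ (1/α) * g x
        nlinarith
      have hlf : l < f x := lt_of_lt_of_le hlt hfl
      exact ⟨hx01, by rwa [abs_of_nonneg (le_trans hl0 hlf.le)]⟩
    have hm : ENNReal.ofReal (3*s/2) ≤ volume {x ∈ Ioo (0:ℝ) 1 | l < |f x|} := by
      have h := measure_mono (μ := (volume : Measure ℝ)) hsub
      rwa [Real.volume_Ioo, show 3*s - 3*s/2 = 3*s/2 by ring] at h
    have hfin : volume {x ∈ Ioo (0:ℝ) 1 | l < |f x|} ≠ ⊤ := by
      have hss : {x ∈ Ioo (0:ℝ) 1 | l < |f x|} ⊆ Ioo (0:ℝ) 1 := fun x hx => hx.1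
      have h : volume {x ∈ Ioo (0:ℝ) 1 | l < |f x|} ≤ volume (Ioo (0:ℝ) 1) :=
        measure_mono (μ := (volume : Measure ℝ)) hss
      exact ne_top_of_le_ne_top (by simp [Real.volume_Ioo]) h
    have := (ENNReal.ofReal_le_iff_le_toReal hfin).1 hm
    have := this.trans hlm
    linarith [hs.1]
  -- the two lintegrals
  set H : ℝ → ℝ≥0∞ := fun u => ENNReal.ofReal ((u ^ (1/α) * G u) ^ q / u) with hH_def
  have hHmeas : Measurable H := by
    apply ENNReal.measurable_ofReal.comp
    fun_prop
  have hHne : ∀ u, H u ≠ ⊤ := fun u => ENNReal.ofReal_ne_top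
  set B : ℝ≥0∞ := ∫⁻ t in Ioo (0:ℝ) 1, ENNReal.ofReal ((t ^ (1/p + 1/α) * g t) ^ q / t)
    with hB_def
  set A : ℝ≥0∞ := ∫⁻ t in Ioo (0:ℝ) 1, ENNReal.ofReal ((t ^ (1/p) * decRearr f t) ^ q / t)
    with hA_def
  -- interval integrals equal toReal of lintegrals
  have hIB : (∫ t in (0:ℝ)..1, (t ^ (1/p + 1/α) * g t) ^ q / t) = B.toReal := by
    rw [intervalIntegral.integral_of_le zero_le_one, integral_Ioc_eq_integral_Ioo, hB_def]
    apply integral_eq_lintegral_of_nonneg_ae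
    · filter_upwards [ae_restrict_mem measurableSet_Ioo] with t ht
      exact div_nonneg (Real.rpow_nonneg
        (mul_nonneg (Real.rpow_nonneg ht.1.le _) (hg0 t ht)) q) ht.1.le
    · have hm : Measurable (fun t : ℝ => (t ^ (1/p + 1/α) * G t) ^ q / t) := by fun_prop
      apply hm.aestronglyMeasurable.congr
      filter_upwards [ae_restrict_mem measurableSet_Ioo] with t ht
      rw [hGeq t ht]
  have hDRanti : AntitoneOn (decRearr f) (Ioi (0:ℝ)) := by
    intro a ha b hb hab
    rw [hdr, hdr]
    apply csInf_le_csInf ⟨0, fun x hx => hx.1⟩ (hSetNe a ha)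
    intro l hl
    exact ⟨hl.1, hl.2.trans hab⟩
  have hIA : (∫ t in (0:ℝ)..1, (t ^ (1/p) * decRearr f t) ^ q / t) = A.toReal := by
    rw [intervalIntegral.integral_of_le zero_le_one, integral_Ioc_eq_integral_Ioo, hA_def]
    apply integral_eq_lintegral_of_nonneg_ae
    · filter_upwards [ae_restrict_mem measurableSet_Ioo] with t ht
      exact div_nonneg (Real.rpow_nonneg
        (mul_nonneg (Real.rpow_nonneg ht.1.le _) (hDnonneg t)) q) ht.1.le
    · have hDmeas : Measurable ((Ioi (0:ℝ)).indicator (decRearr f)) :=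
        measurable_ite_of_antitoneOn Set.ordConnected_Ioi hDRanti
      have hm : Measurable (fun t : ℝ =>
          (t ^ (1/p) * (Ioi (0:ℝ)).indicator (decRearr f) t) ^ q / t) := by fun_prop
      apply hm.aestronglyMeasurable.congr
      filter_upwards [ae_restrict_mem measurableSet_Ioo] with t ht
      rw [indicator_of_mem (mem_Ioi.mpr ht.1)]
  -- KEY 1 : lower bound
  have key1 : ENNReal.ofReal c₁ * B ≤ A := by
    set F : ℝ → ℝ≥0∞ :=
      fun t => ENNReal.ofReal ((t/3) ^ (r - 1)) * ENNReal.ofReal ((G t) ^ q) with hF_def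
    have hFmeas : Measurable F := by
      apply Measurable.mul (f := fun t => ENNReal.ofReal ((t/3) ^ (r - 1))) (g := fun t => ENNReal.ofReal ((G t) ^ q)) <;> apply ENNReal.measurable_ofReal.comp <;> fun_prop
    have e0 : ∫⁻ s in Ioo (0:ℝ) (1/3), F (3*s) ≤ A := by
      have hmono : ∫⁻ s in Ioo (0:ℝ) (1/3), F (3*s)
          ≤ ∫⁻ s in Ioo (0:ℝ) (1/3), ENNReal.ofReal ((s ^ (1/p) * decRearr f s) ^ q / s) := by
        apply lintegral_mono_ae
        filter_upwards [ae_restrict_mem measurableSet_Ioo] with s hs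
        have hs0 : 0 < s := hs.1
        have h3s : 3*s ∈ Ioo (0:ℝ) 1 := ⟨by linarith, by linarith [hs.2]⟩
        have hFv : F (3*s) = ENNReal.ofReal (s ^ (r-1) * (g (3*s)) ^ q) := by
          simp only [hF_def]
          rw [hGeq _ h3s, show (3*s)/3 = s by ring,
            ← ENNReal.ofReal_mul (Real.rpow_nonneg hs0.le _)]
        rw [hFv]
        apply ENNReal.ofReal_le_ofReal
        rw [alg_rpow hs0 (hDnonneg s)]
        have hD := hlow s hs
        have h1 : (g (3*s)) ^ q * s ^ (1/α * q) ≤ (decRearr f s) ^ q := by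
          have h := Real.rpow_le_rpow
            (mul_nonneg (Real.rpow_nonneg hs0.le _) (hg0 _ h3s)) hD hq0.le
          rw [Real.mul_rpow (Real.rpow_nonneg hs0.le _) (hg0 _ h3s),
            ← Real.rpow_mul hs0.le] at h
          linarith [h]
        have hsplit : s ^ (r-1) = s ^ (1/p*q - 1) * s ^ (1/α*q) := by
          rw [← Real.rpow_add hs0]
          congr 1
          rw [hr_def]; ring
        rw [hsplit]
        calc s ^ (1/p*q-1) * s ^ (1/α*q) * (g (3*s))^q
            = s ^ (1/p*q-1) * ((g (3*s))^q * s ^ (1/α*q)) := by ring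
          _ ≤ s ^ (1/p*q-1) * (decRearr f s)^q :=
              mul_le_mul_of_nonneg_left h1 (Real.rpow_nonneg hs0.le _)
      exact hmono.trans (lintegral_mono_set (Ioo_subset_Ioo le_rfl (by norm_num)))
    have e1 := lintegral_Ioo_comp_three F hFmeas (1/3)
    have e2 : ∫⁻ t in Ioo (0:ℝ) (3*(1/3)), F t = ENNReal.ofReal ((3:ℝ)⁻¹ ^ (r-1)) * B := by
      rw [show (3:ℝ) * (1/3) = 1 by norm_num, hB_def,
        ← lintegral_const_mul' _ _ ENNReal.ofReal_ne_top]
      apply setLIntegral_congr_fun measurableSet_Ioo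
      intro t ht
      simp only [hF_def]
      rw [hGeq _ ht, alg_rpow ht.1 (hg0 t ht),
        show t/3 = t * 3⁻¹ by ring, Real.mul_rpow ht.1.le (by norm_num),
        ← ENNReal.ofReal_mul (mul_nonneg (Real.rpow_nonneg ht.1.le _)
          (Real.rpow_nonneg (by norm_num) _)),
        ← ENNReal.ofReal_mul (Real.rpow_nonneg (by norm_num) _)]
      congr 1
      rw [hr_def]; ring
    have e3 : ENNReal.ofReal 3⁻¹ * (ENNReal.ofReal ((3:ℝ)⁻¹ ^ (r-1)) * B)
        = ENNReal.ofReal c₁ * B := by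
      rw [← mul_assoc, ← ENNReal.ofReal_mul (by norm_num)]
      congr 2
      rw [hc1_def]
      nth_rewrite 1 [show ((3:ℝ)⁻¹) = (3:ℝ)⁻¹ ^ (1:ℝ) from (Real.rpow_one _).symm]
      rw [← Real.rpow_add (by norm_num : (0:ℝ) < 3⁻¹)]
      congr 1; ring
    calc ENNReal.ofReal c₁ * B
        = ENNReal.ofReal 3⁻¹ * (ENNReal.ofReal ((3:ℝ)⁻¹ ^ (r-1)) * B) := e3.symm
      _ = ENNReal.ofReal 3⁻¹ * ∫⁻ t in Ioo (0:ℝ) (3*(1/3)), F t := by rw [e2]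
      _ = ∫⁻ s in Ioo (0:ℝ) (1/3), F (3*s) := e1.symm
      _ ≤ A := e0
  -- KEY 2 : upper bound
  have key2 : A ≤ ENNReal.ofReal c₂ * B := by
    set M : ℝ → ℝ≥0∞ := fun t => ∫⁻ u in Ioo (t/2) 1, H u with hM_def
    set K : ℝ≥0∞ := ENNReal.ofReal ((2:ℝ) ^ (1 + q/α)) with hK_def
    have step2a : ∀ t ∈ Ioo (0:ℝ) 1, ∀ s, s ∈ Ico t 1 →
        ENNReal.ofReal ((s ^ (1/α) * g s) ^ q) ≤ K * M t := by
      intro t ht s hs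
      have hs0 : 0 < s := lt_of_lt_of_le ht.1 hs.1
      have hs01 : s ∈ Ioo (0:ℝ) 1 := ⟨hs0, hs.2⟩
      have hsub : Ioo (s/2) s ⊆ Ioo (t/2) 1 := Ioo_subset_Ioo (by linarith [hs.1]) hs.2.le
      have hlb : ∀ u ∈ Ioo (s/2) s,
          ENNReal.ofReal (((s/2) ^ (1/α) * g s) ^ q / s) ≤ H u := by
        intro u hu
        have hu0 : 0 < u := lt_trans (by linarith) hu.1
        have hu01 : u ∈ Ioo (0:ℝ) 1 := ⟨hu0, lt_trans hu.2 hs.2⟩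
        simp only [hH_def]
        rw [hGeq _ hu01]
        apply ENNReal.ofReal_le_ofReal
        have hnum : (s/2) ^ (1/α) * g s ≤ u ^ (1/α) * g u := by
          have h1 := Real.rpow_le_rpow (by linarith : (0:ℝ) ≤ s/2) hu.1.le
            (by positivity : (0:ℝ) ≤ 1/α)
          have h2 : g s ≤ g u := hg hu01 hs01 hu.2.le
          nlinarith [Real.rpow_nonneg hu0.le (1/α), hg0 s hs01, hg0 u hu01,
            Real.rpow_nonneg (show (0:ℝ) ≤ s/2 by linarith) (1/α)]
        have hnum_nn : 0 ≤ (s/2) ^ (1/α) * g s :=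
          mul_nonneg (Real.rpow_nonneg (by linarith) _) (hg0 s hs01)
        exact div_le_div₀
          (Real.rpow_nonneg (mul_nonneg (Real.rpow_nonneg hu0.le _) (hg0 u hu01)) q)
          (Real.rpow_le_rpow hnum_nn hnum hq0.le) hu0 hu.2.le
      have hM1 : ENNReal.ofReal (((s/2) ^ (1/α) * g s) ^ q / s) * ENNReal.ofReal (s/2)
          ≤ M t := by
        have hc : ENNReal.ofReal (((s/2) ^ (1/α) * g s) ^ q / s) * ENNReal.ofReal (s/2)
            = ∫⁻ _ in Ioo (s/2) s, ENNReal.ofReal (((s/2) ^ (1/α) * g s) ^ q / s) := by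
          rw [setLIntegral_const, Real.volume_Ioo, show s - s/2 = s/2 by ring]
        rw [hc]
        calc ∫⁻ _ in Ioo (s/2) s, ENNReal.ofReal (((s/2) ^ (1/α) * g s) ^ q / s)
            ≤ ∫⁻ u in Ioo (s/2) s, H u := by
              apply lintegral_mono_ae
              filter_upwards [ae_restrict_mem measurableSet_Ioo] with u hu
              exact hlb u hu
          _ ≤ M t := by simp only [hM_def]; exact lintegral_mono_set hsub
      have halg : (2:ℝ) ^ (1 + q/α) * (((s/2) ^ (1/α) * g s) ^ q / s * (s/2))
          = (s ^ (1/α) * g s) ^ q := by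
        have e1 : ((s/2):ℝ) ^ (1/α) = s ^ (1/α) * (2:ℝ) ^ (-(1/α)) := by
          rw [div_eq_mul_inv, Real.mul_rpow hs0.le (by norm_num),
            Real.inv_rpow (by norm_num), ← Real.rpow_neg (by norm_num)]
        rw [e1]
        have e2 : (s ^ (1/α) * (2:ℝ) ^ (-(1/α)) * g s) ^ q
            = (s ^ (1/α) * g s) ^ q * (2:ℝ) ^ (-(1/α) * q) := by
          rw [show s ^ (1/α) * (2:ℝ) ^ (-(1/α)) * g s
              = s ^ (1/α) * g s * (2:ℝ) ^ (-(1/α)) by ring,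
            Real.mul_rpow (mul_nonneg (Real.rpow_nonneg hs0.le _) (hg0 s hs01))
              (Real.rpow_nonneg (by norm_num) _),
            ← Real.rpow_mul (by norm_num : (0:ℝ) ≤ 2)]
        rw [e2]
        have e3 : (2:ℝ) ^ (1 + q/α) * (2:ℝ) ^ (-(1/α) * q) = 2 := by
          rw [← Real.rpow_add (by norm_num : (0:ℝ) < 2),
            show 1 + q/α + -(1/α) * q = 1 by ring, Real.rpow_one]
        have e4 : (s ^ (1/α) * g s) ^ q * (2:ℝ) ^ (-(1/α) * q) / s * (s/2)
            = (s ^ (1/α) * g s) ^ q * (2:ℝ) ^ (-(1/α) * q) / 2 := by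
          field_simp
        rw [e4]
        linear_combination ((s ^ (1/α) * g s) ^ q / 2) * e3
      calc ENNReal.ofReal ((s ^ (1/α) * g s) ^ q)
          = K * (ENNReal.ofReal (((s/2) ^ (1/α) * g s) ^ q / s) * ENNReal.ofReal (s/2)) := by
            rw [hK_def, ← ENNReal.ofReal_mul (div_nonneg (Real.rpow_nonneg
              (mul_nonneg (Real.rpow_nonneg (by linarith) _) (hg0 s hs01)) q) hs0.le),
              ← ENNReal.ofReal_mul (by positivity), halg]
        _ ≤ K * M t := mul_le_mul_right hM1 K
    set W : ℝ → ℝ≥0∞ := fun t => ENNReal.ofReal (t ^ (1/p*q - 1)) with hW_def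
    have hWmeas : Measurable W := by
      apply ENNReal.measurable_ofReal.comp; fun_prop
    have hWne : ∀ t, W t ≠ ⊤ := fun t => ENNReal.ofReal_ne_top
    have step2b : ∀ t ∈ Ioo (0:ℝ) 1,
        ENNReal.ofReal ((t ^ (1/p) * decRearr f t) ^ q / t) ≤ W t * (K * M t) := by
      intro t ht
      by_cases hMt : K * M t = ⊤
      · rw [hMt, ENNReal.mul_top]
        · exact le_top
        · simp only [hW_def, ne_eq, ENNReal.ofReal_eq_zero, not_le]
          exact Real.rpow_pos_of_pos ht.1 _
      · set R : ℝ := (K * M t).toReal with hR_def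
        have hR0 : 0 ≤ R := ENNReal.toReal_nonneg
        have hsb : ∀ s, s ∈ Ico t 1 → s ^ (1/α) * g s ≤ R ^ (1/q) := by
          intro s hs
          have h1 := (ENNReal.ofReal_le_iff_le_toReal hMt).1 (step2a t ht s hs)
          have hs0 : 0 < s := lt_of_lt_of_le ht.1 hs.1
          have hnn : 0 ≤ s ^ (1/α) * g s :=
            mul_nonneg (Real.rpow_nonneg hs0.le _) (hg0 s ⟨hs0, hs.2⟩)
          calc s ^ (1/α) * g s = ((s ^ (1/α) * g s) ^ q) ^ (1/q) := by
                rw [← Real.rpow_mul hnn, mul_one_div, div_self hqne, Real.rpow_one]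
            _ ≤ R ^ (1/q) := Real.rpow_le_rpow (Real.rpow_nonneg hnn q) h1 (by positivity)
        have hDle : decRearr f t ≤ R ^ (1/q) := by
          rw [hdr]
          apply csInf_le ⟨0, fun x hx => hx.1⟩
          refine ⟨Real.rpow_nonneg hR0 _, ?_⟩
          have hsub : {x ∈ Ioo (0:ℝ) 1 | R ^ (1/q) < |f x|} ⊆ Ioo 0 t := by
            rintro x ⟨hx01, hlt⟩
            refine ⟨hx01.1, ?_⟩
            by_contra hge
            push_neg at hge
            have hle : |f x| ≤ R ^ (1/q) := by
              have h := hsb x ⟨hge, hx01.2⟩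
              rwa [abs_of_nonneg (mul_nonneg (Real.rpow_nonneg hx01.1.le _) (hg0 x hx01))]
            exact absurd hlt (not_lt.2 hle)
          have h := measure_mono (μ := (volume : Measure ℝ)) hsub
          rw [Real.volume_Ioo, sub_zero] at h
          exact ENNReal.toReal_le_of_le_ofReal ht.1.le h
        have hnum : (t ^ (1/p) * decRearr f t) ^ q / t ≤ t ^ (1/p*q - 1) * R := by
          have h1 : (t ^ (1/p) * decRearr f t) ^ q / t
              ≤ (t ^ (1/p) * R ^ (1/q)) ^ q / t := by
            have hb0 : 0 ≤ t ^ (1/p) * decRearr f t :=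
              mul_nonneg (Real.rpow_nonneg ht.1.le _) (hDnonneg t)
            have hbase : t ^ (1/p) * decRearr f t ≤ t ^ (1/p) * R ^ (1/q) :=
              mul_le_mul_of_nonneg_left hDle (Real.rpow_nonneg ht.1.le _)
            exact (div_le_div_iff_of_pos_right ht.1).mpr (Real.rpow_le_rpow hb0 hbase hq0.le)
          have h2 : (t ^ (1/p) * R ^ (1/q)) ^ q / t = t ^ (1/p*q-1) * (R ^ (1/q)) ^ q :=
            alg_rpow ht.1 (Real.rpow_nonneg hR0 _)
          have h3 : (R ^ (1/q)) ^ q = R := by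
            rw [← Real.rpow_mul hR0, one_div, inv_mul_cancel₀ hqne, Real.rpow_one]
          rw [h2, h3] at h1
          exact h1
        calc ENNReal.ofReal ((t ^ (1/p) * decRearr f t) ^ q / t)
            ≤ ENNReal.ofReal (t ^ (1/p*q-1) * R) := ENNReal.ofReal_le_ofReal hnum
          _ = W t * ENNReal.ofReal R := by
              simp only [hW_def]
              rw [ENNReal.ofReal_mul (Real.rpow_nonneg ht.1.le _)]
          _ ≤ W t * (K * M t) := by
              apply mul_le_mul_right
              rw [hR_def]
              exact ENNReal.ofReal_toReal_le
    -- Fubini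
    set Φ : ℝ → ℝ → ℝ≥0∞ :=
      fun t u => (Ioo (0:ℝ) 1).indicator W t * (Ioo (t/2) 1).indicator H u with hΦ_def
    have hΦm : AEMeasurable (Function.uncurry Φ) (volume.prod volume) := by
      have huc : Function.uncurry Φ = fun z : ℝ × ℝ =>
          ((Ioo (0:ℝ) 1).indicator W z.1) *
          ({z : ℝ × ℝ | z.1/2 < z.2 ∧ z.2 < 1}.indicator (fun z : ℝ × ℝ => H z.2) z) := by
        ext z
        rcases z with ⟨t, u⟩
        simp only [Function.uncurry, hΦ_def]
        congr 1
      rw [huc]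
      apply Measurable.aemeasurable
      apply Measurable.mul
      · exact (hWmeas.indicator measurableSet_Ioo).comp measurable_fst
      · apply Measurable.indicator
        · exact hHmeas.comp measurable_snd
        · rw [show {z : ℝ × ℝ | z.1/2 < z.2 ∧ z.2 < 1}
              = {z : ℝ × ℝ | z.1/2 < z.2} ∩ {z : ℝ × ℝ | z.2 < 1} from rfl]
          exact (measurableSet_lt (measurable_fst.div_const 2) measurable_snd).inter
            (measurableSet_lt measurable_snd measurable_const)
    have fub : ∫⁻ t in Ioo (0:ℝ) 1, W t * M t
        ≤ ENNReal.ofReal ((p/q) * (2:ℝ) ^ (q/p))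
          * ∫⁻ u in Ioo (0:ℝ) 1, ENNReal.ofReal (u ^ (1/p*q)) * H u := by
      have lhs_eq : ∫⁻ t in Ioo (0:ℝ) 1, W t * M t = ∫⁻ t, ∫⁻ u, Φ t u := by
        rw [← lintegral_indicator measurableSet_Ioo]
        apply lintegral_congr
        intro t
        by_cases ht : t ∈ Ioo (0:ℝ) 1
        · rw [indicator_of_mem ht]
          simp only [hΦ_def, hM_def]
          rw [indicator_of_mem ht, ← lintegral_indicator measurableSet_Ioo,
            ← lintegral_const_mul' _ _ (hWne t)]
        · rw [indicator_of_notMem ht]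
          have hz : ∀ u, Φ t u = 0 := by
            intro u
            simp only [hΦ_def]
            rw [indicator_of_notMem ht, zero_mul]
          simp only [hz, lintegral_zero]
      rw [lhs_eq, lintegral_lintegral_swap hΦm]
      have inner_le : ∀ u : ℝ, ∫⁻ t, Φ t u
          ≤ (Ioo (0:ℝ) 1).indicator (fun u => ENNReal.ofReal ((p/q) * (2:ℝ)^(q/p))
            * (ENNReal.ofReal (u ^ (1/p*q)) * H u)) u := by
        intro u
        by_cases hu : u ∈ Ioo (0:ℝ) 1
        · rw [indicator_of_mem hu]
          have hptw : ∀ t : ℝ, Φ t u ≤ (Ioo (0:ℝ) (2*u)).indicator W t * H u := by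
            intro t
            simp only [hΦ_def]
            by_cases ht : t ∈ Ioo (0:ℝ) 1
            · by_cases htu : u ∈ Ioo (t/2) 1
              · rw [indicator_of_mem ht, indicator_of_mem htu,
                  indicator_of_mem (show t ∈ Ioo (0:ℝ) (2*u) from ⟨ht.1, by linarith [htu.1]⟩)]
              · rw [indicator_of_notMem htu, mul_zero]
                exact zero_le'
            · rw [indicator_of_notMem ht, zero_mul]
              exact zero_le'
          calc ∫⁻ t, Φ t u ≤ ∫⁻ t, (Ioo (0:ℝ) (2*u)).indicator W t * H u :=
                lintegral_mono hptw
            _ = (∫⁻ t in Ioo (0:ℝ) (2*u), W t) * H u := by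
                rw [lintegral_mul_const' _ _ (hHne u), lintegral_indicator measurableSet_Ioo]
            _ ≤ ENNReal.ofReal ((p/q) * (2:ℝ)^(q/p)) * (ENNReal.ofReal (u ^ (1/p*q)) * H u) := by
                have hWint : ∫⁻ t in Ioo (0:ℝ) (2*u), W t
                    = ENNReal.ofReal ((2*u) ^ (1/p*q - 1 + 1) / (1/p*q - 1 + 1)) := by
                  simp only [hW_def]
                  refine lintegral_rpow_Ioo ?_ (by linarith [hu.1])
                  have h01 : (0:ℝ) < 1/p*q := by positivity
                  linarith
                rw [hWint, ← mul_assoc, ← ENNReal.ofReal_mul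
                  (show (0:ℝ) ≤ (p/q) * (2:ℝ)^(q/p) by positivity)]
                apply mul_le_mul_left
                apply ENNReal.ofReal_le_ofReal
                rw [show (1:ℝ)/p*q - 1 + 1 = 1/p*q by ring,
                  Real.mul_rpow (by norm_num) hu.1.le]
                rw [div_eq_mul_inv]
                have hqp : ((1:ℝ)/p*q)⁻¹ = p/q := by
                  rw [show (1:ℝ)/p*q = q/p by ring, inv_div]
                rw [hqp]
                apply le_of_eq
                ring
        · rw [indicator_of_notMem hu]
          have hz : ∀ t, Φ t u = 0 := by
            intro t
            simp only [hΦ_def]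
            by_cases ht : t ∈ Ioo (0:ℝ) 1
            · have hnm : u ∉ Ioo (t/2) 1 := by
                intro hmem
                have hu' : u ≤ 0 ∨ 1 ≤ u := by
                  by_contra hcon
                  push_neg at hcon
                  exact hu ⟨hcon.1, hcon.2⟩
                rcases hu' with h0 | h1
                · have : (0:ℝ) < t/2 := by linarith [ht.1]
                  linarith [hmem.1]
                · linarith [hmem.2]
              rw [indicator_of_notMem hnm, mul_zero]
            · rw [indicator_of_notMem ht, zero_mul]
          simp only [hz, lintegral_zero]
          exact zero_le'
      calc ∫⁻ u, ∫⁻ t, Φ t u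
          ≤ ∫⁻ u, (Ioo (0:ℝ) 1).indicator (fun u => ENNReal.ofReal ((p/q) * (2:ℝ)^(q/p))
            * (ENNReal.ofReal (u ^ (1/p*q)) * H u)) u := lintegral_mono inner_le
        _ = ∫⁻ u in Ioo (0:ℝ) 1, ENNReal.ofReal ((p/q) * (2:ℝ)^(q/p))
            * (ENNReal.ofReal (u ^ (1/p*q)) * H u) := lintegral_indicator measurableSet_Ioo _
        _ = ENNReal.ofReal ((p/q) * (2:ℝ)^(q/p))
            * ∫⁻ u in Ioo (0:ℝ) 1, ENNReal.ofReal (u ^ (1/p*q)) * H u :=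
            lintegral_const_mul' _ _ ENNReal.ofReal_ne_top
    have hRB : ∫⁻ u in Ioo (0:ℝ) 1, ENNReal.ofReal (u ^ (1/p*q)) * H u = B := by
      rw [hB_def]
      apply setLIntegral_congr_fun measurableSet_Ioo
      intro u hu
      simp only [hH_def]
      rw [hGeq _ hu, ← ENNReal.ofReal_mul (Real.rpow_nonneg hu.1.le _)]
      congr 1
      rw [alg_rpow hu.1 (hg0 u hu), alg_rpow hu.1 (hg0 u hu), ← mul_assoc,
        ← Real.rpow_add hu.1, show 1/p*q + (1/α*q - 1) = (1/p + 1/α)*q - 1 by ring]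
    calc A ≤ ∫⁻ t in Ioo (0:ℝ) 1, W t * (K * M t) := by
          rw [hA_def]
          apply lintegral_mono_ae
          filter_upwards [ae_restrict_mem measurableSet_Ioo] with t ht
          exact step2b t ht
      _ = K * ∫⁻ t in Ioo (0:ℝ) 1, W t * M t := by
          rw [← lintegral_const_mul' K _ (by rw [hK_def]; exact ENNReal.ofReal_ne_top)]
          exact lintegral_congr fun t => mul_left_comm _ _ _
      _ ≤ K * (ENNReal.ofReal ((p/q) * (2:ℝ)^(q/p)) * B) := by
          apply mul_le_mul_right
          calc ∫⁻ t in Ioo (0:ℝ) 1, W t * M t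
              ≤ ENNReal.ofReal ((p/q) * (2:ℝ)^(q/p))
                * ∫⁻ u in Ioo (0:ℝ) 1, ENNReal.ofReal (u ^ (1/p*q)) * H u := fub
            _ = ENNReal.ofReal ((p/q) * (2:ℝ)^(q/p)) * B := by rw [hRB]
      _ = ENNReal.ofReal c₂ * B := by
          rw [hK_def, ← mul_assoc, ← ENNReal.ofReal_mul
            (show (0:ℝ) ≤ (2:ℝ) ^ (1 + q/α) by positivity), hc2_def]
  -- final assembly
  rw [hIA, hIB]
  have hc1q : 0 < c₁ ^ (1/q) := Real.rpow_pos_of_pos hc10 _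
  have hc2q : 0 < c₂ ^ (1/q) := Real.rpow_pos_of_pos hc20 _
  by_cases hB_top : B = ⊤
  · have hA_top : A = ⊤ := by
      have h := key1
      rw [hB_top, ENNReal.mul_top (by simp [ENNReal.ofReal_eq_zero, not_le, hc10])] at h
      exact top_le_iff.1 h
    rw [hA_top, hB_top]
    simp only [ENNReal.toReal_top]
    rw [Real.zero_rpow (by positivity : (1:ℝ)/q ≠ 0)]
    constructor <;> simp
  · have hAB : A ≤ ENNReal.ofReal c₂ * B := key2
    have hA_ne : A ≠ ⊤ := by
      intro h
      rw [h] at hAB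
      have := top_le_iff.1 hAB
      exact hB_top (by
        rcases ENNReal.mul_eq_top.1 this with ⟨_, h2⟩ | ⟨h1, _⟩
        · exact h2
        · exact absurd h1 ENNReal.ofReal_ne_top)
    have hBt0 : 0 ≤ B.toReal := ENNReal.toReal_nonneg
    have hAt0 : 0 ≤ A.toReal := ENNReal.toReal_nonneg
    have h1 : c₁ * B.toReal ≤ A.toReal := by
      have h := ENNReal.toReal_mono hA_ne key1
      rwa [ENNReal.toReal_mul, ENNReal.toReal_ofReal hc10.le] at h
    have h2 : A.toReal ≤ c₂ * B.toReal := by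
      have hne : ENNReal.ofReal c₂ * B ≠ ⊤ :=
        ENNReal.mul_ne_top ENNReal.ofReal_ne_top hB_top
      have h := ENNReal.toReal_mono hne key2
      rwa [ENNReal.toReal_mul, ENNReal.toReal_ofReal hc20.le] at h
    constructor
    · have hr1 : (c₁ * B.toReal) ^ (1/q) ≤ A.toReal ^ (1/q) :=
        Real.rpow_le_rpow (by positivity) h1 (by positivity)
      rw [Real.mul_rpow hc10.le hBt0] at hr1
      have hcle : 1/c ≤ c₁ ^ (1/q) := by
        have hinv : (c₁ ^ (1/q))⁻¹ ≤ c := by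
          rw [hc_def]
          exact le_add_of_nonneg_left (by positivity)
        rw [one_div, ← inv_inv (c₁ ^ (1/q))]
        gcongr
      calc 1/c * B.toReal ^ (1/q) ≤ c₁ ^ (1/q) * B.toReal ^ (1/q) :=
            mul_le_mul_of_nonneg_right hcle (by positivity)
        _ ≤ A.toReal ^ (1/q) := hr1
    · have hr2 : A.toReal ^ (1/q) ≤ (c₂ * B.toReal) ^ (1/q) :=
        Real.rpow_le_rpow hAt0 h2 (by positivity)
      rw [Real.mul_rpow hc20.le hBt0] at hr2
      calc A.toReal ^ (1/q) ≤ c₂ ^ (1/q) * B.toReal ^ (1/q) := hr2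
        _ ≤ c * B.toReal ^ (1/q) := by
            apply mul_le_mul_of_nonneg_right _ (by positivity)
            rw [hc_def]
            exact le_add_of_nonneg_right (by positivity)
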